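/- (Moore bound, used as 'folklore') Every n-vertex graph with no cycle of length at most 2k has at most n^{1+1/k} + n edges, for integer k ≥ 1. -/

import Mathlib

open SimpleGraph

namespace MooreAux

set_option linter.unusedSectionVars false

variable {V : Type*} [DecidableEq V] {G : SimpleGraph V}

open SimpleGraph.Walk

lemma support_head {u v : V} (p : G.Walk u v) : p.support.head? = some u := by
  cases p <;> simp

lemma edge_start_snd {u v y : V} {p : G.Walk u v} (hp : p.IsPath) (he : s(u, y) ∈ p.edges) :
    p.support.tail.head? = some y := by
  induction p with
  | nil => simp at he
  | @cons u c v h q ih =>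
    rw [edges_cons, List.mem_cons] at he
    rcases he with he | he
    · rw [Sym2.eq_iff] at he
      rcases he with ⟨-, rfl⟩ | ⟨rfl, h2⟩
      · simp [support_head]
      · exact absurd rfl h.ne
    · exact absurd (q.fst_mem_support_of_mem_edges he) ((cons_isPath_iff _ _).1 hp).2

lemma edge_end_length {x y : V} {r : G.Walk x y} (hr : r.IsPath) (he : s(y, x) ∈ r.edges) :
    r.length = 1 := by
  induction r with
  | nil => simp at he
  | @cons x c y h q ih =>
    rw [edges_cons, List.mem_cons] at he
    rcases he with he | he
    · rw [Sym2.eq_iff] at he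
      rcases he with ⟨h1, h2⟩ | ⟨rfl, h2⟩
      · exact absurd h2 h.ne
      · have hq : q.IsPath := hr.of_cons
        rw [isPath_iff_eq_nil] at hq
        subst hq
        simp
    · exact absurd (q.snd_mem_support_of_mem_edges he) ((cons_isPath_iff _ _).1 hr).2

lemma cycle_of_chord {w x : V} (r : G.Walk w x) (hr : r.IsPath) (ha : G.Adj x w)
    (h2 : 2 ≤ r.length) :
    ∃ (z : V) (c : G.Walk z z), c.IsCycle ∧ c.length = r.length + 1 := by
  refine ⟨x, Walk.cons ha r, ?_, by simp⟩
  rw [cons_isCycle_iff]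
  exact ⟨hr, fun he => by have := edge_end_length hr he; omega⟩

lemma eq_of_support_eq {u v : V} (p : G.Walk u v) :
    ∀ (q : G.Walk u v), p.support = q.support → p = q := by
  induction p with
  | nil =>
    intro q h
    cases q with
    | nil => rfl
    | cons h' q' =>
      exfalso
      simp only [support_nil, support_cons] at h
      exact q'.support_ne_nil (by simpa using h)
  | @cons u a v h p' ih =>
    intro q hq
    cases q with
    | nil =>
      exfalso
      simp only [support_nil, support_cons] at hq
      exact p'.support_ne_nil (by simpa using hq)
    | @cons _ b _ h' q' =>
      simp only [support_cons, List.cons.injEq, true_and] at hq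
      have hab : a = b := by
        have h1 := support_head p'
        have h2 := support_head q'
        rw [hq] at h1
        rw [h1] at h2
        exact (Option.some.injEq _ _ ▸ h2).symm ▸ rfl
      subst hab
      rw [ih q' hq]


lemma isPath_append' {u v w : V} {p : G.Walk u v} {q : G.Walk v w} (hp : p.IsPath)
    (hq : q.IsPath) (h : ∀ x ∈ p.support, x ∈ q.support → x = v) : (p.append q).IsPath := by
  rw [isPath_def, support_append]
  have hqn := hq.support_nodup
  rw [support_eq_cons] at hqn
  rw [List.nodup_cons] at hqn
  refine List.Nodup.append hp.support_nodup hqn.2 ?_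
  intro x hx hx'
  have : x ∈ q.support := by rw [support_eq_cons]; exact List.mem_cons_of_mem _ hx'
  have := h x hx this
  subst this
  exact hqn.1 hx'

lemma exists_prefix_firstmeet {b v : V} (q : G.Walk b v) (S : Set V) (hv : v ∈ S) :
    ∃ z ∈ S, ∃ r : G.Walk b z, (∀ y ∈ r.support, y ∈ q.support) ∧ r.length ≤ q.length ∧
      (∀ y ∈ r.support, y ∈ S → y = z) ∧ (q.IsPath → r.IsPath) := by
  induction q with
  | nil =>
    exact ⟨_, hv, Walk.nil, by simp, le_refl _, fun y hy _ => by simpa using hy,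
      fun _ => IsPath.nil⟩
  | @cons b c v h q' ih =>
    by_cases hb : b ∈ S
    · exact ⟨b, hb, Walk.nil, by simp, by simp, by simp, fun _ => IsPath.nil⟩
    · obtain ⟨z, hz, r, hsub, hlen, hmeet, hpath⟩ := ih hv
      refine ⟨z, hz, Walk.cons h r, ?_, by simp [Nat.succ_le_succ hlen], ?_, ?_⟩
      · intro y hy
        rw [support_cons, List.mem_cons] at hy ⊢
        exact hy.imp id (hsub y)
      · intro y hy hyS
        rw [support_cons, List.mem_cons] at hy
        rcases hy with rfl | hy
        · exact absurd hyS hb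
        · exact hmeet y hy hyS
      · intro hqp
        rw [cons_isPath_iff] at hqp ⊢
        exact ⟨hpath hqp.1, fun hbr => hqp.2 (hsub b hbr)⟩

lemma cycle_of_two_paths : ∀ (N : ℕ) {u v : V} (p q : G.Walk u v),
    p.length + q.length ≤ N → p.IsPath → q.IsPath → p ≠ q →
    ∃ (z : V) (c : G.Walk z z), c.IsCycle ∧ c.length ≤ p.length + q.length := by
  intro N
  induction N with
  | zero =>
    intro u v p q hN hp hq hne
    cases p with
    | nil =>
      cases q with
      | nil => exact absurd rfl hne
      | cons h' q₁ => simp at hN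
    | cons h p₁ => simp at hN
  | succ N ih =>
    intro u v p q hN hp hq hne
    cases p with
    | nil =>
      cases q with
      | nil => exact absurd rfl hne
      | cons h₂ q₁ =>
        exact absurd q₁.end_mem_support ((cons_isPath_iff _ _).1 hq).2
    | @cons _ a _ h₁ p₁ =>
      cases q with
      | nil =>
        exact absurd p₁.end_mem_support ((cons_isPath_iff _ _).1 hp).2
      | @cons _ b _ h₂ q₁ =>
        by_cases hab : a = b
        · subst hab
          have hne' : p₁ ≠ q₁ := fun hh => hne (by rw [hh])
          obtain ⟨z, c, hc, hlen⟩ := ih p₁ q₁ (by simp at hN; omega) hp.of_cons hq.of_cons hne'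
          exact ⟨z, c, hc, by simp only [length_cons]; omega⟩
        · -- main case
          have hup₁ : u ∉ p₁.support := ((cons_isPath_iff _ _).1 hp).2
          have huq₁ : u ∉ q₁.support := ((cons_isPath_iff _ _).1 hq).2
          have hvp : v ∈ (Walk.cons h₁ p₁).support := end_mem_support _
          obtain ⟨z, hz, r, hsub, hlen, hmeet, hrpath⟩ :=
            exists_prefix_firstmeet q₁ {y | y ∈ (Walk.cons h₁ p₁).support} hvp
          have hr : r.IsPath := hrpath hq.of_cons
          have hzu : z ≠ u := by
            rintro rfl
            exact huq₁ (hsub z r.end_mem_support)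
          set s := (Walk.cons h₁ p₁).takeUntil z hz with hs_def
          have hs : s.IsPath := hp.takeUntil hz
          have hslen : 1 ≤ s.length := by
            rcases Nat.eq_zero_or_pos s.length with h0 | h0
            · exact absurd (eq_of_length_eq_zero h0).symm hzu
            · exact h0
          -- X : Walk b u
          have hX : (r.append s.reverse).IsPath := by
            refine isPath_append' hr hs.reverse ?_
            intro x hxr hxs
            rw [support_reverse, List.mem_reverse] at hxs
            exact hmeet x hxr (support_takeUntil_subset _ hz hxs)
          have hedge : s(u, b) ∉ (r.append s.reverse).edges := by
            rw [edges_append, List.mem_append]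
            rintro (he | he)
            · exact huq₁ (hsub u (r.fst_mem_support_of_mem_edges he))
            · rw [edges_reverse, List.mem_reverse] at he
              -- s(u,b) ∈ s.edges, s : Walk u z path ⟹ second vertex of s is b
              have h2 := edge_start_snd hs he
              -- second vertex of s = second vertex of p = a
              have hspec := (Walk.cons h₁ p₁).take_spec hz
              have : (Walk.cons h₁ p₁).support.tail.head? = some b := by
                rw [← hspec, support_append]
                rw [support_eq_cons s] at *
                simp only [List.cons_append, List.tail_cons] at h2 ⊢
                rcases hss : s.support.tail with _ | ⟨y, l⟩
                · rw [hss] at h2; simp at h2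
                · rw [hss] at h2; simpa using h2
              rw [support_cons, List.tail_cons, support_head] at this
              exact hab (Option.some.inj this)
          refine ⟨u, Walk.cons h₂ (r.append s.reverse), ?_, ?_⟩
          · rw [cons_isCycle_iff]
            exact ⟨hX, hedge⟩
          · simp only [length_cons, length_append, length_reverse]
            have := length_takeUntil_le (Walk.cons h₁ p₁) hz
            rw [← hs_def] at this
            simp only [length_cons] at this ⊢
            omega

lemma support_of_length_one {w x : V} (r : G.Walk w x) (h : r.length = 1) :
    r.support = [w, x] := by
  cases r with
  | nil => simp at h
  | cons h' r' =>
    cases r' with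
    | nil => simp
    | cons h'' r'' => simp at h

lemma support_adj_snd {k : ℕ}
    (hgirth : ∀ (v : V) (c : G.Walk v v), c.IsCycle → 2 * k < c.length)
    {w v₀ x : V} {p : G.Walk w v₀} (hp : p.IsPath) (hlen : p.length + 1 ≤ k)
    (hadj : G.Adj w x) (hx : x ∈ p.support) : p.support.tail.head? = some x := by
  have hxw : x ≠ w := hadj.ne'
  have hr : (p.takeUntil x hx).IsPath := hp.takeUntil hx
  have hrlen1 : 1 ≤ (p.takeUntil x hx).length := by
    rcases Nat.eq_zero_or_pos (p.takeUntil x hx).length with h0 | h0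
    · exact absurd (eq_of_length_eq_zero h0) (Ne.symm hxw)
    · exact h0
  rcases eq_or_lt_of_le hrlen1 with h1 | h1
  · rw [← take_spec p hx, support_append, support_of_length_one _ h1.symm]
    simp [support_head]
  · obtain ⟨z, c, hc, hclen⟩ := cycle_of_chord (p.takeUntil x hx) hr hadj.symm h1
    have := hgirth z c hc
    have hle := length_takeUntil_le p hx
    omega

variable [Fintype V] [DecidableRel G.Adj]

def F (G : SimpleGraph V) [DecidableRel G.Adj] (v₀ : V) (t : Finset V) (i : ℕ) :
    Finset ((w : V) × G.Walk w v₀) :=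
  Finset.univ.sigma fun w => (G.finsetWalkLength i w v₀).filter
    fun p => p.IsPath ∧ ∀ y ∈ p.support, y ∈ t

lemma mem_F {v₀ : V} {t : Finset V} {i : ℕ} {x : (w : V) × G.Walk w v₀} :
    x ∈ F G v₀ t i ↔ x.2.length = i ∧ x.2.IsPath ∧ ∀ y ∈ x.2.support, y ∈ t := by
  cases x with
  | mk w p =>
    simp only [F, Finset.mem_sigma, Finset.mem_univ, Finset.mem_filter, true_and,
      SimpleGraph.mem_finsetWalkLength_iff, and_assoc]

lemma growth {k : ℕ}
    (hgirth : ∀ (v : V) (c : G.Walk v v), c.IsCycle → 2 * k < c.length)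
    {v₀ : V} {t : Finset V} {d i : ℕ}
    (ht : ∀ v ∈ t, d + 1 ≤ (G.neighborFinset v ∩ t).card) (hik : i + 1 ≤ k) :
    d * (F G v₀ t i).card ≤ (F G v₀ t (i + 1)).card := by
  classical
  set Ext : ((w : V) × G.Walk w v₀) → Finset ((w : V) × G.Walk w v₀) := fun x =>
    ((G.neighborFinset x.1 ∩ t) \ x.2.support.toFinset).attach.image
      fun y => ⟨y.1, Walk.cons (G.adj_symm (by
        have hy := y.2
        rw [Finset.mem_sdiff, Finset.mem_inter, SimpleGraph.mem_neighborFinset] at hy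
        exact hy.1.1)) x.2⟩ with hExt
  have hsub : ∀ x ∈ F G v₀ t i, Ext x ⊆ F G v₀ t (i + 1) := by
    intro x hx z hz
    rw [hExt] at hz
    simp only [Finset.mem_image, Finset.mem_attach, true_and, Subtype.exists] at hz
    obtain ⟨y, hy, rfl⟩ := hz
    rw [Finset.mem_sdiff, Finset.mem_inter] at hy
    rw [mem_F] at hx ⊢
    refine ⟨by simp [hx.1], ?_, ?_⟩
    · rw [cons_isPath_iff]
      exact ⟨hx.2.1, fun hc => hy.2 (List.mem_toFinset.2 hc)⟩
    · intro z hz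
      rw [support_cons, List.mem_cons] at hz
      rcases hz with rfl | hz
      · exact hy.1.2
      · exact hx.2.2 z hz
  have hcard : ∀ x ∈ F G v₀ t i, d ≤ (Ext x).card := by
    intro x hx
    rw [mem_F] at hx
    have hx1t : x.1 ∈ t := hx.2.2 x.1 x.2.start_mem_support
    have hinj : ((G.neighborFinset x.1 ∩ t) \ x.2.support.toFinset).attach.card = (Ext x).card := by
      rw [hExt]
      rw [Finset.card_image_of_injective _ ?_]
      intro y₁ y₂ hy
      have := congrArg Sigma.fst hy
      exact Subtype.ext this
    rw [← hinj, Finset.card_attach]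
    have hsplit := Finset.card_sdiff_add_card_inter (G.neighborFinset x.1 ∩ t) x.2.support.toFinset
    have hone : ((G.neighborFinset x.1 ∩ t) ∩ x.2.support.toFinset).card ≤ 1 := by
      rw [Finset.card_le_one]
      intro a ha b hb
      rw [Finset.mem_inter, Finset.mem_inter, SimpleGraph.mem_neighborFinset] at ha hb
      have h1 := support_adj_snd hgirth hx.2.1 (by omega) ha.1.1 (List.mem_toFinset.1 ha.2)
      have h2 := support_adj_snd hgirth hx.2.1 (by omega) hb.1.1 (List.mem_toFinset.1 hb.2)
      rw [h1] at h2
      exact Option.some.inj h2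
    have := ht x.1 hx1t
    omega
  have hdisj : ∀ x₁ ∈ F G v₀ t i, ∀ x₂ ∈ F G v₀ t i, x₁ ≠ x₂ → Disjoint (Ext x₁) (Ext x₂) := by
    intro x₁ hx₁ x₂ hx₂ hne
    rw [Finset.disjoint_left]
    intro z hz₁ hz₂
    rw [hExt] at hz₁ hz₂
    simp only [Finset.mem_image, Finset.mem_attach, true_and, Subtype.exists] at hz₁ hz₂
    obtain ⟨y₁, hy₁, he₁⟩ := hz₁
    obtain ⟨y₂, hy₂, he₂⟩ := hz₂
    apply hne
    have hsupp : z.2.support.tail = x₁.2.support ∧ z.2.support.tail = x₂.2.support := by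
      constructor
      · rw [← he₁]; simp
      · rw [← he₂]; simp
    have hsupp_eq : x₁.2.support = x₂.2.support := hsupp.1.symm.trans hsupp.2 ▸ rfl
    obtain ⟨w₁, p₁⟩ := x₁
    obtain ⟨w₂, p₂⟩ := x₂
    simp only at hsupp_eq
    have hw : w₁ = w₂ := by
      have g1 := support_head p₁
      have g2 := support_head p₂
      rw [hsupp_eq] at g1
      rw [g1] at g2
      exact Option.some.inj g2
    subst hw
    rw [eq_of_support_eq p₁ p₂ hsupp_eq]
  calc d * (F G v₀ t i).card = ∑ _x ∈ F G v₀ t i, d := by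
        rw [Finset.sum_const, smul_eq_mul, mul_comm]
    _ ≤ ∑ x ∈ F G v₀ t i, (Ext x).card := Finset.sum_le_sum hcard
    _ = ((F G v₀ t i).biUnion Ext).card := (Finset.card_biUnion hdisj).symm
    _ ≤ (F G v₀ t (i + 1)).card :=
        Finset.card_le_card (Finset.biUnion_subset.2 hsub)

lemma count_paths {k d : ℕ}
    (hgirth : ∀ (v : V) (c : G.Walk v v), c.IsCycle → 2 * k < c.length)
    (t : Finset V) (htne : t.Nonempty)
    (ht : ∀ v ∈ t, d + 1 ≤ (G.neighborFinset v ∩ t).card) :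
    d ^ k ≤ Fintype.card V := by
  obtain ⟨v₀, hv₀⟩ := htne
  have base : 1 ≤ (F G v₀ t 0).card := by
    rw [Nat.succ_le_iff, Finset.card_pos]
    exact ⟨⟨v₀, Walk.nil⟩, mem_F.2 ⟨rfl, IsPath.nil, by simpa using hv₀⟩⟩
  have step : ∀ i, i ≤ k → d ^ i ≤ (F G v₀ t i).card := by
    intro i
    induction i with
    | zero => intro _; simpa using base
    | succ i ihi =>
      intro hik
      calc d ^ (i + 1) = d * d ^ i := by ring
        _ ≤ d * (F G v₀ t i).card := Nat.mul_le_mul_left d (ihi (by omega))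
        _ ≤ (F G v₀ t (i + 1)).card := growth hgirth ht hik
  have hinj : (F G v₀ t k).card ≤ Fintype.card V := by
    rw [← Finset.card_univ]
    apply Finset.card_le_card_of_injOn (fun x => x.1) (fun _ _ => Finset.mem_univ _)
    intro x₁ hx₁ x₂ hx₂ hfst
    obtain ⟨w₁, p₁⟩ := x₁
    obtain ⟨w₂, p₂⟩ := x₂
    simp only at hfst
    subst hfst
    rw [Finset.mem_coe, mem_F] at hx₁ hx₂
    dsimp only at hx₁ hx₂
    by_contra hne
    have hpne : p₁ ≠ p₂ := by
      intro h; exact hne (by rw [h])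
    obtain ⟨z, c, hc, hclen⟩ := cycle_of_two_paths (2 * k) p₁ p₂ (by omega) hx₁.2.1 hx₂.2.1 hpne
    have := hgirth z c hc
    omega
  exact (step k le_rfl).trans hinj

def ed (G : SimpleGraph V) [DecidableRel G.Adj] (s : Finset V) : ℕ :=
  ∑ v ∈ s, (G.neighborFinset v ∩ s).card

lemma exists_min_degree_subgraph (d : ℕ) :
    ∀ (s : Finset V), 2 * d * s.card < ed G s →
      ∃ t, t ⊆ s ∧ t.Nonempty ∧ ∀ v ∈ t, d + 1 ≤ (G.neighborFinset v ∩ t).card := by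
  intro s
  induction s using Finset.strongInduction with
  | _ s ih =>
    intro hs
    by_cases hall : ∀ v ∈ s, d + 1 ≤ (G.neighborFinset v ∩ s).card
    · refine ⟨s, subset_rfl, ?_, hall⟩
      rw [Finset.nonempty_iff_ne_empty]
      rintro rfl
      simp [ed] at hs
    · push_neg at hall
      obtain ⟨v, hv, hdeg⟩ := hall
      rw [Nat.lt_succ_iff] at hdeg
      set s' := s.erase v with hs'
      have hed : ed G s ≤ ed G s' + 2 * (G.neighborFinset v ∩ s).card := by
        have hsplit : ed G s = (G.neighborFinset v ∩ s).card +
            ∑ u ∈ s', (G.neighborFinset u ∩ s).card := by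
          rw [ed, ← Finset.add_sum_erase _ _ hv]
        have hterm : ∀ u ∈ s', (G.neighborFinset u ∩ s).card ≤
            (G.neighborFinset u ∩ s').card + (if v ∈ G.neighborFinset u then 1 else 0) := by
          intro u hu
          by_cases hvn : v ∈ G.neighborFinset u
          · rw [if_pos hvn]
            have : G.neighborFinset u ∩ s ⊆ insert v (G.neighborFinset u ∩ s') := by
              intro x hx
              rw [Finset.mem_inter] at hx
              rcases eq_or_ne x v with rfl | hxv
              · exact Finset.mem_insert_self _ _
              · exact Finset.mem_insert_of_mem
                  (Finset.mem_inter.2 ⟨hx.1, Finset.mem_erase.2 ⟨hxv, hx.2⟩⟩)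
            calc (G.neighborFinset u ∩ s).card ≤ (insert v (G.neighborFinset u ∩ s')).card :=
                  Finset.card_le_card this
              _ ≤ (G.neighborFinset u ∩ s').card + 1 := Finset.card_insert_le _ _
          · rw [if_neg hvn, add_zero]
            apply Finset.card_le_card
            intro x hx
            rw [Finset.mem_inter] at hx ⊢
            have hxv : x ≠ v := by rintro rfl; exact hvn hx.1
            exact ⟨hx.1, Finset.mem_erase.2 ⟨hxv, hx.2⟩⟩
        have hsum2 : ∑ u ∈ s', (if v ∈ G.neighborFinset u then 1 else 0) ≤
            (G.neighborFinset v ∩ s).card := by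
          rw [Finset.sum_boole]
          push_cast
          apply Finset.card_le_card
          intro u hu
          rw [Finset.mem_filter] at hu
          rw [Finset.mem_inter, SimpleGraph.mem_neighborFinset]
          rw [SimpleGraph.mem_neighborFinset] at hu
          exact ⟨hu.2.symm, (Finset.erase_subset _ _) hu.1⟩
        calc ed G s = (G.neighborFinset v ∩ s).card +
              ∑ u ∈ s', (G.neighborFinset u ∩ s).card := hsplit
          _ ≤ (G.neighborFinset v ∩ s).card +
              (∑ u ∈ s', ((G.neighborFinset u ∩ s').card + if v ∈ G.neighborFinset u then 1 else 0)) := by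
              gcongr
              exact hterm _ ‹_›
          _ = (G.neighborFinset v ∩ s).card + (ed G s' +
              ∑ u ∈ s', if v ∈ G.neighborFinset u then 1 else 0) := by
              rw [Finset.sum_add_distrib]; rfl
          _ ≤ (G.neighborFinset v ∩ s).card + (ed G s' + (G.neighborFinset v ∩ s).card) := by
              gcongr
          _ = ed G s' + 2 * (G.neighborFinset v ∩ s).card := by ring
      have hcard : s.card = s'.card + 1 := by
        rw [hs', Finset.card_erase_of_mem hv]
        have : 1 ≤ s.card := Finset.card_pos.2 ⟨v, hv⟩
        omega
      have hs'lt : 2 * d * s'.card < ed G s' := by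
        have hexp : 2 * d * s.card = 2 * d * s'.card + 2 * d := by rw [hcard]; ring
        have h1 : 2 * d * s'.card + 2 * d < ed G s' + 2 * d := by
          calc 2 * d * s'.card + 2 * d = 2 * d * s.card := hexp.symm
            _ < ed G s := hs
            _ ≤ ed G s' + 2 * (G.neighborFinset v ∩ s).card := hed
            _ ≤ ed G s' + 2 * d := by omega
        omega
      obtain ⟨t, hts, htne, ht⟩ := ih s' (Finset.erase_ssubset hv) hs'lt
      exact ⟨t, hts.trans (Finset.erase_subset _ _), htne, ht⟩


lemma main_nat {V : Type*} [Fintype V] [DecidableEq V] (G : SimpleGraph V)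
    [DecidableRel G.Adj] (k : ℕ)
    (hgirth : ∀ (v : V) (c : G.Walk v v), c.IsCycle → 2 * k < c.length) (d : ℕ)
    (hd : d * Fintype.card V < G.edgeFinset.card) : d ^ k ≤ Fintype.card V := by
  have h2 : ed G Finset.univ = 2 * G.edgeFinset.card := by
    rw [← G.sum_degrees_eq_twice_card_edges, ed]
    refine Finset.sum_congr rfl fun v _ => ?_
    rw [Finset.inter_univ]
    rfl
  obtain ⟨t, -, htne, ht⟩ := exists_min_degree_subgraph d Finset.univ (by
    rw [h2, Finset.card_univ]
    have hx : 2 * d * Fintype.card V = 2 * (d * Fintype.card V) := by ring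
    omega)
  exact count_paths hgirth t htne ht

end MooreAux

/-- Moore bound: every `n`-vertex graph with no cycle of length at most `2k` has at most
`n^{1+1/k} + n` edges. -/
theorem stmt13 (V : Type*) [Fintype V] [DecidableEq V] (G : SimpleGraph V)
    [DecidableRel G.Adj] (k : ℕ) (hk : 1 ≤ k)
    (hgirth : ∀ (v : V) (c : G.Walk v v), c.IsCycle → 2 * k < c.length) :
    (G.edgeFinset.card : ℝ)
      ≤ (Fintype.card V : ℝ) ^ (1 + 1 / (k : ℝ)) + (Fintype.card V : ℝ) := by
  set n := Fintype.card V with hn_def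
  set m := G.edgeFinset.card with hm_def
  have key : ∀ d : ℕ, d * n < m → d ^ k ≤ n := fun d hd =>
    MooreAux.main_nat G k hgirth d hd
  by_cases hm : m = 0
  · rw [hm]
    push_cast
    positivity
  · have hn : 1 ≤ n := by
      obtain ⟨e, he⟩ := Finset.card_pos.1 (Nat.pos_of_ne_zero hm)
      have : Nonempty V := ⟨e.out.1⟩
      exact Fintype.card_pos
    have hnpos : (0:ℝ) < n := by exact_mod_cast hn
    have hk0 : (k:ℝ) ≠ 0 := Nat.cast_ne_zero.2 (by omega)
    have hqk : ∀ d : ℕ, d ^ k ≤ n → (d : ℝ) ≤ (n:ℝ) ^ (1 / (k:ℝ)) := by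
      intro d hdk
      have h1 : ((d:ℝ) ^ (k:ℝ)) ≤ (n:ℝ) := by
        rw [Real.rpow_natCast]
        exact_mod_cast hdk
      have h3 : ((d:ℝ) ^ (k:ℝ)) ^ (1/(k:ℝ)) = (d:ℝ) := by
        rw [← Real.rpow_mul (by positivity), mul_one_div, div_self hk0, Real.rpow_one]
      calc (d:ℝ) = ((d:ℝ) ^ (k:ℝ)) ^ (1/(k:ℝ)) := h3.symm
        _ ≤ (n:ℝ) ^ (1/(k:ℝ)) := by
            apply Real.rpow_le_rpow (by positivity) h1 (by positivity)
    have hrpow : (n:ℝ) ^ (1 + 1/(k:ℝ)) = (n:ℝ) * (n:ℝ) ^ (1/(k:ℝ)) := by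
      rw [Real.rpow_add hnpos, Real.rpow_one]
    set q := m / n with hq_def
    have hmod : m = n * q + m % n := (Nat.div_add_mod m n).symm
    have hmodlt : m % n < n := Nat.mod_lt _ (by omega)
    rcases lt_or_eq_of_le (Nat.div_mul_le_self m n) with hlt | heq
    · -- q * n < m
      have hqle : (q:ℝ) ≤ (n:ℝ) ^ (1/(k:ℝ)) := hqk q (key q hlt)
      have hcast : (m:ℝ) = (n:ℝ) * (q:ℝ) + ((m % n : ℕ):ℝ) := by exact_mod_cast hmod
      have hmodcast : ((m % n : ℕ):ℝ) ≤ (n:ℝ) := by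
        have : (m % n : ℕ) ≤ n := le_of_lt hmodlt
        exact_mod_cast this
      calc (m:ℝ) = (n:ℝ) * (q:ℝ) + ((m % n : ℕ):ℝ) := hcast
        _ ≤ (n:ℝ) * ((n:ℝ) ^ (1/(k:ℝ))) + (n:ℝ) := by
            have := mul_le_mul_of_nonneg_left hqle (le_of_lt hnpos)
            linarith
        _ = (n:ℝ) ^ (1 + 1/(k:ℝ)) + (n:ℝ) := by rw [hrpow]
    · -- q * n = m
      rw [← hq_def] at heq
      rcases Nat.eq_zero_or_pos q with hq0 | hqpos
      · rw [hq0, zero_mul] at heq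
        have hm0 : m = 0 := heq.symm
        exact absurd hm0 hm
      · have hlt' : (q - 1) * n < m := by
          rw [← heq]
          exact mul_lt_mul_of_pos_right (by omega) (by omega)
        have hqle : ((q - 1 : ℕ):ℝ) ≤ (n:ℝ) ^ (1/(k:ℝ)) := hqk _ (key _ hlt')
        have hq1 : (q:ℝ) ≤ (n:ℝ) ^ (1/(k:ℝ)) + 1 := by
          rw [Nat.cast_sub hqpos] at hqle
          push_cast at hqle
          linarith
        have hcast : (m:ℝ) = (q:ℝ) * (n:ℝ) := by exact_mod_cast heq.symm
        calc (m:ℝ) = (q:ℝ) * (n:ℝ) := hcast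
          _ ≤ ((n:ℝ) ^ (1/(k:ℝ)) + 1) * (n:ℝ) := by
              exact mul_le_mul_of_nonneg_right hq1 (le_of_lt hnpos)
          _ = (n:ℝ) ^ (1 + 1/(k:ℝ)) + (n:ℝ) := by rw [hrpow]; ring
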